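/- Let R be a commutative ring and let A(u), B(u) ∈ R[[u]] be power series with A(0) = B(0) = 1. Then there exists a unique power series F(u,v) ∈ R[[u,v]] such that F(u,v)·(u·B(v) − v·B(u)) = u²·A(v) − v²·A(u). Moreover this F satisfies F(u,0) = u, F(0,v) = v, F(u,v) = F(v,u), and F(u,v) = u + v + Σ_{i,j≥1} a_{i,j} u^i v^j for some coefficients a_{i,j} ∈ R. -/

import Mathlib

noncomputable section

/-- A one-variable power series `f`, viewed as a multivariable power series
in the single variable `i`:  `f(x_i)`. -/
def onVar {R : Type*} [CommRing R] {σ : Type*} [DecidableEq σ] (i : σ) (f : PowerSeries R) :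
    MvPowerSeries σ R :=
  fun d => if d = Finsupp.single i (d i) then PowerSeries.coeff (d i) f else 0

/-- The exponent vector of the monomial `u^i v^j`. -/
def ee (i j : ℕ) : Fin 2 →₀ ℕ := Finsupp.single 0 i + Finsupp.single 1 j

namespace St1

open MvPowerSeries

variable {R : Type*} [CommRing R]

@[simp] lemma ee_apply0 (i j : ℕ) : ee i j 0 = i := by
  simp [ee, Finsupp.single_apply]

@[simp] lemma ee_apply1 (i j : ℕ) : ee i j 1 = j := by
  simp [ee, Finsupp.single_apply]

lemma eq_ee (d : Fin 2 →₀ ℕ) : d = ee (d 0) (d 1) := by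
  ext a
  fin_cases a <;> simp

lemma ee_inj {a b c d : ℕ} : ee a b = ee c d ↔ a = c ∧ b = d := by
  constructor
  · intro h
    constructor
    · have := congrArg (fun f => f 0) h; simpa using this
    · have := congrArg (fun f => f 1) h; simpa using this
  · rintro ⟨rfl, rfl⟩; rfl

lemma single0_eq_ee (c : ℕ) : Finsupp.single (0 : Fin 2) c = ee c 0 := by simp [ee]

lemma single1_eq_ee (c : ℕ) : Finsupp.single (1 : Fin 2) c = ee 0 c := by simp [ee]

lemma ee_add (a b c d : ℕ) : ee (a + c) (b + d) = ee a b + ee c d := by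
  ext x; fin_cases x <;> simp

lemma coeff_onVar0 (f : PowerSeries R) (i j : ℕ) :
    MvPowerSeries.coeff (ee i j) (onVar 0 f) = if j = 0 then PowerSeries.coeff i f else 0 := by
  show (if ee i j = Finsupp.single 0 (ee i j 0) then PowerSeries.coeff (ee i j 0) f else 0) = _
  rw [ee_apply0, single0_eq_ee]
  by_cases hj : j = 0
  · subst hj; simp
  · rw [if_neg (by simp [ee_inj, hj]), if_neg hj]

lemma coeff_onVar1 (f : PowerSeries R) (i j : ℕ) :
    MvPowerSeries.coeff (ee i j) (onVar 1 f) = if i = 0 then PowerSeries.coeff j f else 0 := by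
  show (if ee i j = Finsupp.single 1 (ee i j 1) then PowerSeries.coeff (ee i j 1) f else 0) = _
  rw [ee_apply1, single1_eq_ee]
  by_cases hi : i = 0
  · subst hi; simp
  · rw [if_neg (by simp [ee_inj, hi]), if_neg hi]

lemma coeff_X0_pow_mul (g : MvPowerSeries (Fin 2) R) (n i j : ℕ) :
    MvPowerSeries.coeff (ee i j) (MvPowerSeries.X 0 ^ n * g) =
      if n ≤ i then MvPowerSeries.coeff (ee (i - n) j) g else 0 := by
  rw [X_pow_eq, coeff_monomial_mul]
  by_cases h : n ≤ i
  · rw [if_pos (by rwa [Finsupp.single_le_iff, ee_apply0]), if_pos h, one_mul]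
    have : ee i j - Finsupp.single 0 n = ee (i - n) j := by
      ext x; fin_cases x <;> simp [Finsupp.tsub_apply]
    rw [this]
  · rw [if_neg (by rwa [Finsupp.single_le_iff, ee_apply0]), if_neg h]

lemma coeff_X1_pow_mul (g : MvPowerSeries (Fin 2) R) (n i j : ℕ) :
    MvPowerSeries.coeff (ee i j) (MvPowerSeries.X 1 ^ n * g) =
      if n ≤ j then MvPowerSeries.coeff (ee i (j - n)) g else 0 := by
  rw [X_pow_eq, coeff_monomial_mul]
  by_cases h : n ≤ j
  · rw [if_pos (by rwa [Finsupp.single_le_iff, ee_apply1]), if_pos h, one_mul]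
    have : ee i j - Finsupp.single 1 n = ee i (j - n) := by
      ext x; fin_cases x <;> simp [Finsupp.tsub_apply]
    rw [this]
  · rw [if_neg (by rwa [Finsupp.single_le_iff, ee_apply1]), if_neg h]

lemma coeff_X0_mul (g : MvPowerSeries (Fin 2) R) (i j : ℕ) :
    MvPowerSeries.coeff (ee i j) (MvPowerSeries.X 0 * g) =
      if 1 ≤ i then MvPowerSeries.coeff (ee (i - 1) j) g else 0 := by
  simpa using coeff_X0_pow_mul g 1 i j

lemma coeff_X1_mul (g : MvPowerSeries (Fin 2) R) (i j : ℕ) :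
    MvPowerSeries.coeff (ee i j) (MvPowerSeries.X 1 * g) =
      if 1 ≤ j then MvPowerSeries.coeff (ee i (j - 1)) g else 0 := by
  simpa using coeff_X1_pow_mul g 1 i j


/-- divided difference: `(f(u) - f(v))/(u - v)`. -/
def delta (f : PowerSeries R) : MvPowerSeries (Fin 2) R :=
  fun d => PowerSeries.coeff (d 0 + d 1 + 1) f

lemma coeff_delta (f : PowerSeries R) (i j : ℕ) :
    MvPowerSeries.coeff (ee i j) (delta f) = PowerSeries.coeff (i + j + 1) f := by
  show delta f (ee i j) = _
  simp [delta]

lemma key (f : PowerSeries R) :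
    (MvPowerSeries.X 0 - MvPowerSeries.X 1) * delta f = onVar 0 f - onVar 1 f := by
  suffices h : ∀ i j : ℕ, MvPowerSeries.coeff (ee i j)
      ((MvPowerSeries.X 0 - MvPowerSeries.X 1) * delta f)
      = MvPowerSeries.coeff (ee i j) (onVar 0 f - onVar 1 f) by
    ext d
    have := h (d 0) (d 1)
    rwa [← eq_ee d] at this
  intro i j
  rw [sub_mul, map_sub, map_sub, coeff_X0_mul, coeff_X1_mul, coeff_onVar0, coeff_onVar1]
  rcases i with _ | i <;> rcases j with _ | j <;>
    simp [coeff_delta]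
  rw [show i + (j + 1) + 1 = i + 1 + j + 1 from by omega, sub_self]

lemma X_sub_X_nzd (g : MvPowerSeries (Fin 2) R)
    (h : (MvPowerSeries.X 0 - MvPowerSeries.X 1) * g = 0) : g = 0 := by
  have hc : ∀ i j : ℕ, (if 1 ≤ i then MvPowerSeries.coeff (ee (i - 1) j) g else 0)
      = (if 1 ≤ j then MvPowerSeries.coeff (ee i (j - 1)) g else 0) := by
    intro i j
    have := congrArg (MvPowerSeries.coeff (ee i j)) h
    rw [sub_mul, map_sub, coeff_X0_mul, coeff_X1_mul, map_zero, sub_eq_zero] at this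
    exact this
  have hz : ∀ j i : ℕ, MvPowerSeries.coeff (ee i j) g = 0 := by
    intro j
    induction j with
    | zero =>
      intro i
      have := hc (i + 1) 0
      simpa using this
    | succ j ih =>
      intro i
      have := hc (i + 1) (j + 1)
      simpa [ih] using this
  ext d
  have := hz (d 1) (d 0)
  rw [← eq_ee d] at this
  simpa using this

/-- swap of the two variables -/
def sw (f : MvPowerSeries (Fin 2) R) : MvPowerSeries (Fin 2) R :=
  fun d => f (ee (d 1) (d 0))

lemma coeff_sw' (f : MvPowerSeries (Fin 2) R) (d : Fin 2 →₀ ℕ) :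
    MvPowerSeries.coeff d (sw f) = MvPowerSeries.coeff (ee (d 1) (d 0)) f := rfl

lemma coeff_sw (f : MvPowerSeries (Fin 2) R) (i j : ℕ) :
    MvPowerSeries.coeff (ee i j) (sw f) = MvPowerSeries.coeff (ee j i) f := by
  rw [coeff_sw', ee_apply0, ee_apply1]

lemma sw_sub (f g : MvPowerSeries (Fin 2) R) : sw (f - g) = sw f - sw g := rfl

lemma swE_add (x y : Fin 2 →₀ ℕ) :
    ee ((x + y) 1) ((x + y) 0) = ee (x 1) (x 0) + ee (y 1) (y 0) := by
  rw [Finsupp.add_apply, Finsupp.add_apply, ee_add]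

lemma sw_mul (f g : MvPowerSeries (Fin 2) R) : sw (f * g) = sw f * sw g := by
  classical
  suffices h : ∀ i j : ℕ, MvPowerSeries.coeff (ee i j) (sw (f * g))
      = MvPowerSeries.coeff (ee i j) (sw f * sw g) by
    ext d
    have := h (d 0) (d 1)
    rwa [← eq_ee d] at this
  intro i j
  rw [coeff_sw, MvPowerSeries.coeff_mul, MvPowerSeries.coeff_mul]
  refine Finset.sum_nbij' (fun p => (ee (p.1 1) (p.1 0), ee (p.2 1) (p.2 0)))
    (fun p => (ee (p.1 1) (p.1 0), ee (p.2 1) (p.2 0))) ?_ ?_ ?_ ?_ ?_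
  · intro p hp
    rw [Finset.HasAntidiagonal.mem_antidiagonal] at hp ⊢
    show ee (p.1 1) (p.1 0) + ee (p.2 1) (p.2 0) = ee i j
    rw [← swE_add, hp, ee_apply0, ee_apply1]
  · intro p hp
    rw [Finset.HasAntidiagonal.mem_antidiagonal] at hp ⊢
    show ee (p.1 1) (p.1 0) + ee (p.2 1) (p.2 0) = ee j i
    rw [← swE_add, hp, ee_apply0, ee_apply1]
  · intro p hp
    rw [Prod.ext_iff]
    constructor
    · show ee (ee (p.1 1) (p.1 0) 1) (ee (p.1 1) (p.1 0) 0) = p.1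
      rw [ee_apply0, ee_apply1]
      exact (eq_ee p.1).symm
    · show ee (ee (p.2 1) (p.2 0) 1) (ee (p.2 1) (p.2 0) 0) = p.2
      rw [ee_apply0, ee_apply1]
      exact (eq_ee p.2).symm
  · intro p hp
    rw [Prod.ext_iff]
    constructor
    · show ee (ee (p.1 1) (p.1 0) 1) (ee (p.1 1) (p.1 0) 0) = p.1
      rw [ee_apply0, ee_apply1]
      exact (eq_ee p.1).symm
    · show ee (ee (p.2 1) (p.2 0) 1) (ee (p.2 1) (p.2 0) 0) = p.2
      rw [ee_apply0, ee_apply1]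
      exact (eq_ee p.2).symm
  · intro p hp
    show MvPowerSeries.coeff p.1 f * MvPowerSeries.coeff p.2 g
      = MvPowerSeries.coeff (ee (p.1 1) (p.1 0)) (sw f)
        * MvPowerSeries.coeff (ee (p.2 1) (p.2 0)) (sw g)
    rw [coeff_sw', coeff_sw', ee_apply0, ee_apply1, ee_apply0, ee_apply1,
      ← eq_ee p.1, ← eq_ee p.2]


lemma coeff_mul_ee0 (G H : MvPowerSeries (Fin 2) R) (i : ℕ) :
    MvPowerSeries.coeff (ee i 0) (G * H)
      = ∑ k ∈ Finset.range (i + 1),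
          MvPowerSeries.coeff (ee k 0) G * MvPowerSeries.coeff (ee (i - k) 0) H := by
  classical
  rw [← single0_eq_ee, MvPowerSeries.coeff_mul, Finsupp.antidiagonal_single, Finset.sum_map,
    ← Finset.Nat.sum_antidiagonal_eq_sum_range_succ
      (fun x y => MvPowerSeries.coeff (ee x 0) G * MvPowerSeries.coeff (ee y 0) H)]
  apply Finset.sum_congr rfl
  intro p hp
  simp [single0_eq_ee]

lemma coeff_mul_0ee (G H : MvPowerSeries (Fin 2) R) (j : ℕ) :
    MvPowerSeries.coeff (ee 0 j) (G * H)
      = ∑ k ∈ Finset.range (j + 1),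
          MvPowerSeries.coeff (ee 0 k) G * MvPowerSeries.coeff (ee 0 (j - k)) H := by
  classical
  rw [← single1_eq_ee, MvPowerSeries.coeff_mul, Finsupp.antidiagonal_single, Finset.sum_map,
    ← Finset.Nat.sum_antidiagonal_eq_sum_range_succ
      (fun x y => MvPowerSeries.coeff (ee 0 x) G * MvPowerSeries.coeff (ee 0 y) H)]
  apply Finset.sum_congr rfl
  intro p hp
  simp [single1_eq_ee]

lemma sw_X0 : sw (MvPowerSeries.X 0 : MvPowerSeries (Fin 2) R) = MvPowerSeries.X 1 := by
  suffices h : ∀ i j : ℕ, MvPowerSeries.coeff (ee i j)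
      (sw (MvPowerSeries.X 0 : MvPowerSeries (Fin 2) R))
      = MvPowerSeries.coeff (ee i j) (MvPowerSeries.X 1) by
    ext d
    have := h (d 0) (d 1)
    rwa [← eq_ee d] at this
  intro i j
  rw [coeff_sw, MvPowerSeries.coeff_X, MvPowerSeries.coeff_X, single0_eq_ee, single1_eq_ee]
  simp [ee_inj, and_comm]

lemma sw_X1 : sw (MvPowerSeries.X 1 : MvPowerSeries (Fin 2) R) = MvPowerSeries.X 0 := by
  suffices h : ∀ i j : ℕ, MvPowerSeries.coeff (ee i j)
      (sw (MvPowerSeries.X 1 : MvPowerSeries (Fin 2) R))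
      = MvPowerSeries.coeff (ee i j) (MvPowerSeries.X 0) by
    ext d
    have := h (d 0) (d 1)
    rwa [← eq_ee d] at this
  intro i j
  rw [coeff_sw, MvPowerSeries.coeff_X, MvPowerSeries.coeff_X, single0_eq_ee, single1_eq_ee]
  simp [ee_inj, and_comm]

lemma sw_onVar0 (f : PowerSeries R) : sw (onVar 0 f) = onVar 1 f := by
  suffices h : ∀ i j : ℕ, MvPowerSeries.coeff (ee i j) (sw (onVar (0 : Fin 2) f))
      = MvPowerSeries.coeff (ee i j) (onVar 1 f) by
    ext d
    have := h (d 0) (d 1)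
    rwa [← eq_ee d] at this
  intro i j
  rw [coeff_sw, coeff_onVar0, coeff_onVar1]

lemma sw_onVar1 (f : PowerSeries R) : sw (onVar 1 f) = onVar 0 f := by
  suffices h : ∀ i j : ℕ, MvPowerSeries.coeff (ee i j) (sw (onVar (1 : Fin 2) f))
      = MvPowerSeries.coeff (ee i j) (onVar 0 f) by
    ext d
    have := h (d 0) (d 1)
    rwa [← eq_ee d] at this
  intro i j
  rw [coeff_sw, coeff_onVar1, coeff_onVar0]

end St1

open St1 in
/-- For power series `A`, `B` with `A(0) = B(0) = 1` there is a unique power series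
`F(u,v)` with `F(u,v)·(u·B(v) − v·B(u)) = u²·A(v) − v²·A(u)`; moreover `F(u,0) = u`,
`F(0,v) = v`, `F(u,v) = F(v,u)`, i.e. `F` has the form `u + v + Σ_{i,j≥1} a_{i,j}u^iv^j`. -/
theorem statement1 {R : Type*} [CommRing R] (A B : PowerSeries R)
    (hA : PowerSeries.constantCoeff A = 1) (hB : PowerSeries.constantCoeff B = 1) :
    (∃! F : MvPowerSeries (Fin 2) R,
      F * (MvPowerSeries.X 0 * onVar 1 B - MvPowerSeries.X 1 * onVar 0 B) =
        (MvPowerSeries.X 0) ^ 2 * onVar 1 A - (MvPowerSeries.X 1) ^ 2 * onVar 0 A) ∧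
    (∀ F : MvPowerSeries (Fin 2) R,
      F * (MvPowerSeries.X 0 * onVar 1 B - MvPowerSeries.X 1 * onVar 0 B) =
        (MvPowerSeries.X 0) ^ 2 * onVar 1 A - (MvPowerSeries.X 1) ^ 2 * onVar 0 A →
      -- `F(u,0) = u`:
      (∀ i : ℕ, MvPowerSeries.coeff (ee i 0) F = if i = 1 then 1 else 0) ∧
      -- `F(0,v) = v`:
      (∀ j : ℕ, MvPowerSeries.coeff (ee 0 j) F = if j = 1 then 1 else 0) ∧
      -- `F(u,v) = F(v,u)`:
      (∀ i j : ℕ, MvPowerSeries.coeff (ee i j) F = MvPowerSeries.coeff (ee j i) F)) := by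
  classical
  set D : MvPowerSeries (Fin 2) R :=
    MvPowerSeries.X 0 * onVar 1 B - MvPowerSeries.X 1 * onVar 0 B with hDdef
  set N : MvPowerSeries (Fin 2) R :=
    (MvPowerSeries.X 0) ^ 2 * onVar 1 A - (MvPowerSeries.X 1) ^ 2 * onVar 0 A with hNdef
  set C : MvPowerSeries (Fin 2) R := onVar 1 B - MvPowerSeries.X 1 * St1.delta B with hCdef
  set M : MvPowerSeries (Fin 2) R :=
    (MvPowerSeries.X 0 + MvPowerSeries.X 1) * onVar 1 A
      - (MvPowerSeries.X 1) ^ 2 * St1.delta A with hMdef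
  have hD : D = (MvPowerSeries.X 0 - MvPowerSeries.X 1) * C := by
    rw [hDdef, hCdef]
    linear_combination ((MvPowerSeries.X 1 : MvPowerSeries (Fin 2) R)) * St1.key B
  have hN : N = (MvPowerSeries.X 0 - MvPowerSeries.X 1) * M := by
    rw [hNdef, hMdef]
    linear_combination ((MvPowerSeries.X 1 : MvPowerSeries (Fin 2) R) ^ 2) * St1.key A
  have h00 : (0 : Fin 2 →₀ ℕ) = ee 0 0 := by
    ext a; fin_cases a <;> simp
  have hB0 : PowerSeries.coeff 0 B = 1 := by
    rw [PowerSeries.coeff_zero_eq_constantCoeff]; exact hB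
  have hA0 : PowerSeries.coeff 0 A = 1 := by
    rw [PowerSeries.coeff_zero_eq_constantCoeff]; exact hA
  have hCc : MvPowerSeries.constantCoeff C = 1 := by
    rw [← MvPowerSeries.coeff_zero_eq_constantCoeff_apply, h00, hCdef, map_sub,
      coeff_onVar1, coeff_X1_mul]
    simp [hB0]
  have hCu : C * C.invOfUnit 1 = 1 :=
    MvPowerSeries.mul_invOfUnit C 1 (by rw [hCc]; rfl)
  -- uniqueness of solutions
  have huniq : ∀ F1 F2 : MvPowerSeries (Fin 2) R, F1 * D = N → F2 * D = N → F1 = F2 := by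
    intro F1 F2 h1 h2
    rw [hD] at h1 h2
    have h3 : (MvPowerSeries.X 0 - MvPowerSeries.X 1) * ((F1 - F2) * C) = 0 := by
      linear_combination h1 - h2
    have h4 := St1.X_sub_X_nzd _ h3
    have h5 : F1 - F2 = 0 := by
      calc F1 - F2 = (F1 - F2) * (C * C.invOfUnit 1) := by rw [hCu, mul_one]
        _ = ((F1 - F2) * C) * C.invOfUnit 1 := by ring
        _ = 0 := by rw [h4, zero_mul]
    exact sub_eq_zero.mp h5
  have hF0 : (M * C.invOfUnit 1) * D = N := by
    rw [hD, hN]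
    calc (M * C.invOfUnit 1) * ((MvPowerSeries.X 0 - MvPowerSeries.X 1) * C)
        = (MvPowerSeries.X 0 - MvPowerSeries.X 1) * M * (C * C.invOfUnit 1) := by ring
      _ = (MvPowerSeries.X 0 - MvPowerSeries.X 1) * M := by rw [hCu, mul_one]
  refine ⟨⟨M * C.invOfUnit 1, hF0, fun y hy => huniq y _ hy hF0⟩, ?_⟩
  intro F hF
  -- coefficients of D and N on the axes
  have hDc : ∀ q : ℕ, MvPowerSeries.coeff (ee q 0) D = if q = 1 then 1 else 0 := by
    intro q
    rw [hDdef, map_sub, coeff_X0_mul, coeff_X1_mul]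
    rcases q with _ | _ | q <;> simp [coeff_onVar1, hB0]
  have hNc : ∀ q : ℕ, MvPowerSeries.coeff (ee q 0) N = if q = 2 then 1 else 0 := by
    intro q
    rw [hNdef, map_sub, coeff_X0_pow_mul, coeff_X1_pow_mul]
    rcases q with _ | _ | _ | q <;> simp [coeff_onVar1, hA0]
  have hDc' : ∀ q : ℕ, MvPowerSeries.coeff (ee 0 q) D = if q = 1 then -1 else 0 := by
    intro q
    rw [hDdef, map_sub, coeff_X0_mul, coeff_X1_mul]
    rcases q with _ | _ | q <;> simp [coeff_onVar0, hB0]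
  have hNc' : ∀ q : ℕ, MvPowerSeries.coeff (ee 0 q) N = if q = 2 then -1 else 0 := by
    intro q
    rw [hNdef, map_sub, coeff_X0_pow_mul, coeff_X1_pow_mul]
    rcases q with _ | _ | _ | q <;> simp [coeff_onVar0, hA0]
  have key1 : ∀ i : ℕ, MvPowerSeries.coeff (ee i 0) F = if i = 1 then 1 else 0 := by
    intro i
    have h := congrArg (MvPowerSeries.coeff (ee (i + 1) 0)) hF
    rw [coeff_mul_ee0] at h
    have hsum : ∑ k ∈ Finset.range (i + 2),
        MvPowerSeries.coeff (ee k 0) F * MvPowerSeries.coeff (ee (i + 1 - k) 0) D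
        = MvPowerSeries.coeff (ee i 0) F := by
      rw [Finset.sum_congr rfl (fun k hk => ?_),
        Finset.sum_ite_eq' (Finset.range (i + 2)) i
          (fun k => MvPowerSeries.coeff (ee k 0) F)]
      · rw [if_pos (by simp)]
      · rw [Finset.mem_range] at hk
        by_cases hki : k = i
        · subst hki; rw [hDc]; simp
        · rw [hDc, if_neg (by omega), if_neg hki, mul_zero]
    rw [hsum, hNc] at h
    rw [h]
    by_cases hi : i = 1
    · subst hi; simp
    · rw [if_neg (by omega), if_neg hi]
  have key2 : ∀ j : ℕ, MvPowerSeries.coeff (ee 0 j) F = if j = 1 then 1 else 0 := by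
    intro j
    have h := congrArg (MvPowerSeries.coeff (ee 0 (j + 1))) hF
    rw [coeff_mul_0ee] at h
    have hsum : ∑ k ∈ Finset.range (j + 2),
        MvPowerSeries.coeff (ee 0 k) F * MvPowerSeries.coeff (ee 0 (j + 1 - k)) D
        = -MvPowerSeries.coeff (ee 0 j) F := by
      rw [Finset.sum_congr rfl (fun k hk => ?_),
        Finset.sum_ite_eq' (Finset.range (j + 2)) j
          (fun k => -MvPowerSeries.coeff (ee 0 k) F)]
      · rw [if_pos (by simp)]
      · rw [Finset.mem_range] at hk
        by_cases hkj : k = j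
        · subst hkj; rw [hDc']; simp
        · rw [hDc', if_neg (by omega), if_neg hkj, mul_zero]
    rw [hsum, hNc'] at h
    have h2 : MvPowerSeries.coeff (ee 0 j) F = -(if j + 1 = 2 then (-1 : R) else 0) := by
      rw [← h, neg_neg]
    rw [h2]
    by_cases hj : j = 1
    · subst hj; simp
    · rw [if_neg (by omega), if_neg hj, neg_zero]
  refine ⟨key1, key2, ?_⟩
  -- symmetry
  have hswD : St1.sw D = -D := by
    rw [hDdef, sw_sub, sw_mul, sw_mul, sw_X0, sw_X1, sw_onVar0, sw_onVar1]
    ring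
  have hswN : St1.sw N = -N := by
    rw [hNdef, show ((MvPowerSeries.X 0 : MvPowerSeries (Fin 2) R)) ^ 2
        = MvPowerSeries.X 0 * MvPowerSeries.X 0 from sq _,
      show ((MvPowerSeries.X 1 : MvPowerSeries (Fin 2) R)) ^ 2
        = MvPowerSeries.X 1 * MvPowerSeries.X 1 from sq _,
      sw_sub, sw_mul, sw_mul, sw_mul, sw_mul, sw_X0, sw_X1, sw_onVar0, sw_onVar1]
    ring
  have hsw : St1.sw F * D = N := by
    have h := congrArg St1.sw hF
    rw [sw_mul, hswD, hswN] at h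
    linear_combination -h
  have hFF : St1.sw F = F := huniq _ _ hsw hF
  intro i j
  have := congrArg (MvPowerSeries.coeff (ee i j)) hFF
  rw [coeff_sw] at this
  exact this.symm

end
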